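/- Let x, y be real numbers with 0 < y ≤ x and x + y < 1, and set h = √(xy/((1−x)(1−y))). Then the function η ↦ χ(x,y;η), where χ(x,y;η) := −xy·log η + ((1−x−y)²/2)·log(1−η) + (1/2)·log(1+η) − (1−x)y·log(y+(1−x)η) − x(1−y)·log(x+(1−y)η) + x(1−x)·log(x+(1−x)η) + y(1−y)·log(y+(1−y)η) + ((x−y)²/2)·log(x+y+(2−x−y)η), has vanishing first and second derivatives at η = h: ∂_η χ(x,y;η)|_{η=h} = 0 and ∂²_η χ(x,y;η)|_{η=h} = 0. -/

import Mathlib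

/-- The η-dependent part of the Regime II free energy. -/
noncomputable def chi (x y η : ℝ) : ℝ :=
  -(x * y) * Real.log η
    + (1 - x - y) ^ 2 / 2 * Real.log (1 - η)
    + 1 / 2 * Real.log (1 + η)
    - (1 - x) * y * Real.log (y + (1 - x) * η)
    - x * (1 - y) * Real.log (x + (1 - y) * η)
    + x * (1 - x) * Real.log (x + (1 - x) * η)
    + y * (1 - y) * Real.log (y + (1 - y) * η)
    + (x - y) ^ 2 / 2 * Real.log (x + y + (2 - x - y) * η)

/-- First derivative of `chi` in `η`. -/
noncomputable def gfun (x y η : ℝ) : ℝ :=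
  -(x * y) * η⁻¹
    + (1 - x - y) ^ 2 / 2 * (-1 / (1 - η))
    + 1 / 2 * (1 / (1 + η))
    - (1 - x) * y * ((1 - x) / (y + (1 - x) * η))
    - x * (1 - y) * ((1 - y) / (x + (1 - y) * η))
    + x * (1 - x) * ((1 - x) / (x + (1 - x) * η))
    + y * (1 - y) * ((1 - y) / (y + (1 - y) * η))
    + (x - y) ^ 2 / 2 * ((2 - x - y) / (x + y + (2 - x - y) * η))

/-- Second derivative of `chi` in `η`. -/
noncomputable def gfun2 (x y η : ℝ) : ℝ :=
  x * y / η ^ 2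
    + (-((1 - x - y) ^ 2 / 2 / (1 - η) ^ 2))
    + (-(1 / 2 / (1 + η) ^ 2))
    - (-((1 - x) * y * (1 - x) ^ 2 / (y + (1 - x) * η) ^ 2))
    - (-(x * (1 - y) * (1 - y) ^ 2 / (x + (1 - y) * η) ^ 2))
    + (-(x * (1 - x) * (1 - x) ^ 2 / (x + (1 - x) * η) ^ 2))
    + (-(y * (1 - y) * (1 - y) ^ 2 / (y + (1 - y) * η) ^ 2))
    + (-((x - y) ^ 2 / 2 * (2 - x - y) ^ 2 / (x + y + (2 - x - y) * η) ^ 2))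

lemma chi_hasDeriv (x y : ℝ) (hy : 0 < y) (hx : 0 < x) (hx1 : x < 1) (hy1 : y < 1)
    {η : ℝ} (h0 : 0 < η) (h1 : η < 1) :
    HasDerivAt (fun t => chi x y t) (gfun x y η) η := by
  have p2 : (0:ℝ) < 1 - η := by linarith
  have p3 : (0:ℝ) < 1 + η := by linarith
  have p4 : 0 < y + (1 - x) * η := by nlinarith
  have p5 : 0 < x + (1 - y) * η := by nlinarith
  have p6 : 0 < x + (1 - x) * η := by nlinarith
  have p7 : 0 < y + (1 - y) * η := by nlinarith
  have p8 : 0 < x + y + (2 - x - y) * η := by nlinarith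
  have lin : ∀ A B : ℝ, HasDerivAt (fun t : ℝ => A + B * t) B η := fun A B => by
    simpa using ((hasDerivAt_id η).const_mul B).const_add A
  have l2 : HasDerivAt (fun t : ℝ => 1 - t) (-1 : ℝ) η := (hasDerivAt_id η).const_sub 1
  have l3 : HasDerivAt (fun t : ℝ => 1 + t) (1 : ℝ) η := by
    simpa using (hasDerivAt_id η).const_add 1
  have d1 : HasDerivAt (fun t : ℝ => -(x * y) * Real.log t) (-(x * y) * η⁻¹) η :=
    (Real.hasDerivAt_log h0.ne').const_mul _
  have d2 : HasDerivAt (fun t : ℝ => (1 - x - y) ^ 2 / 2 * Real.log (1 - t))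
      ((1 - x - y) ^ 2 / 2 * (-1 / (1 - η))) η := (l2.log p2.ne').const_mul _
  have d3 : HasDerivAt (fun t : ℝ => 1 / 2 * Real.log (1 + t))
      (1 / 2 * (1 / (1 + η))) η := (l3.log p3.ne').const_mul _
  have d4 : HasDerivAt (fun t : ℝ => (1 - x) * y * Real.log (y + (1 - x) * t))
      ((1 - x) * y * ((1 - x) / (y + (1 - x) * η))) η :=
    ((lin y (1 - x)).log p4.ne').const_mul _
  have d5 : HasDerivAt (fun t : ℝ => x * (1 - y) * Real.log (x + (1 - y) * t))
      (x * (1 - y) * ((1 - y) / (x + (1 - y) * η))) η :=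
    ((lin x (1 - y)).log p5.ne').const_mul _
  have d6 : HasDerivAt (fun t : ℝ => x * (1 - x) * Real.log (x + (1 - x) * t))
      (x * (1 - x) * ((1 - x) / (x + (1 - x) * η))) η :=
    ((lin x (1 - x)).log p6.ne').const_mul _
  have d7 : HasDerivAt (fun t : ℝ => y * (1 - y) * Real.log (y + (1 - y) * t))
      (y * (1 - y) * ((1 - y) / (y + (1 - y) * η))) η :=
    ((lin y (1 - y)).log p7.ne').const_mul _
  have d8 : HasDerivAt (fun t : ℝ => (x - y) ^ 2 / 2 * Real.log (x + y + (2 - x - y) * t))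
      ((x - y) ^ 2 / 2 * ((2 - x - y) / (x + y + (2 - x - y) * η))) η :=
    ((lin (x + y) (2 - x - y)).log p8.ne').const_mul _
  exact ((((((d1.add d2).add d3).sub d4).sub d5).add d6).add d7).add d8

lemma gfun_hasDeriv (x y : ℝ) (hy : 0 < y) (hx : 0 < x) (hx1 : x < 1) (hy1 : y < 1)
    {η : ℝ} (h0 : 0 < η) (h1 : η < 1) :
    HasDerivAt (fun t => gfun x y t) (gfun2 x y η) η := by
  have p2 : (0:ℝ) < 1 - η := by linarith
  have p3 : (0:ℝ) < 1 + η := by linarith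
  have p4 : 0 < y + (1 - x) * η := by nlinarith
  have p5 : 0 < x + (1 - y) * η := by nlinarith
  have p6 : 0 < x + (1 - x) * η := by nlinarith
  have p7 : 0 < y + (1 - y) * η := by nlinarith
  have p8 : 0 < x + y + (2 - x - y) * η := by nlinarith
  have lin : ∀ A B : ℝ, HasDerivAt (fun t : ℝ => A + B * t) B η := fun A B => by
    simpa using ((hasDerivAt_id η).const_mul B).const_add A
  have l2 : HasDerivAt (fun t : ℝ => 1 - t) (-1 : ℝ) η := (hasDerivAt_id η).const_sub 1
  have l3 : HasDerivAt (fun t : ℝ => 1 + t) (1 : ℝ) η := by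
    simpa using (hasDerivAt_id η).const_add 1
  have d1 : HasDerivAt (fun t : ℝ => -(x * y) * t⁻¹) (x * y / η ^ 2) η := by
    have h := (hasDerivAt_inv h0.ne').const_mul (-(x * y))
    exact h.congr_deriv (by ring)
  have d2 : HasDerivAt (fun t : ℝ => (1 - x - y) ^ 2 / 2 * (-1 / (1 - t)))
      (-((1 - x - y) ^ 2 / 2 / (1 - η) ^ 2)) η := by
    have h := ((hasDerivAt_const η (-1 : ℝ)).div l2 p2.ne').const_mul ((1 - x - y) ^ 2 / 2)
    exact h.congr_deriv (by ring)
  have d3 : HasDerivAt (fun t : ℝ => 1 / 2 * (1 / (1 + t)))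
      (-(1 / 2 / (1 + η) ^ 2)) η := by
    have h := ((hasDerivAt_const η (1 : ℝ)).div l3 p3.ne').const_mul (1 / 2 : ℝ)
    exact h.congr_deriv (by ring)
  have d4 : HasDerivAt (fun t : ℝ => (1 - x) * y * ((1 - x) / (y + (1 - x) * t)))
      (-((1 - x) * y * (1 - x) ^ 2 / (y + (1 - x) * η) ^ 2)) η := by
    have h := ((hasDerivAt_const η (1 - x)).div (lin y (1 - x)) p4.ne').const_mul ((1 - x) * y)
    exact h.congr_deriv (by ring)
  have d5 : HasDerivAt (fun t : ℝ => x * (1 - y) * ((1 - y) / (x + (1 - y) * t)))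
      (-(x * (1 - y) * (1 - y) ^ 2 / (x + (1 - y) * η) ^ 2)) η := by
    have h := ((hasDerivAt_const η (1 - y)).div (lin x (1 - y)) p5.ne').const_mul (x * (1 - y))
    exact h.congr_deriv (by ring)
  have d6 : HasDerivAt (fun t : ℝ => x * (1 - x) * ((1 - x) / (x + (1 - x) * t)))
      (-(x * (1 - x) * (1 - x) ^ 2 / (x + (1 - x) * η) ^ 2)) η := by
    have h := ((hasDerivAt_const η (1 - x)).div (lin x (1 - x)) p6.ne').const_mul (x * (1 - x))
    exact h.congr_deriv (by ring)
  have d7 : HasDerivAt (fun t : ℝ => y * (1 - y) * ((1 - y) / (y + (1 - y) * t)))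
      (-(y * (1 - y) * (1 - y) ^ 2 / (y + (1 - y) * η) ^ 2)) η := by
    have h := ((hasDerivAt_const η (1 - y)).div (lin y (1 - y)) p7.ne').const_mul (y * (1 - y))
    exact h.congr_deriv (by ring)
  have d8 : HasDerivAt (fun t : ℝ => (x - y) ^ 2 / 2 * ((2 - x - y) / (x + y + (2 - x - y) * t)))
      (-((x - y) ^ 2 / 2 * (2 - x - y) ^ 2 / (x + y + (2 - x - y) * η) ^ 2)) η := by
    have h := ((hasDerivAt_const η (2 - x - y)).div (lin (x + y) (2 - x - y))
      p8.ne').const_mul ((x - y) ^ 2 / 2)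
    exact h.congr_deriv (by ring)
  exact ((((((d1.add d2).add d3).sub d4).sub d5).add d6).add d7).add d8

lemma alg1 (a b : ℝ) (ha : 0 < a) (hb : 0 < b) (hab : a * b < 1) :
    gfun (a ^ 2 / (1 + a ^ 2)) (b ^ 2 / (1 + b ^ 2)) (a * b) = 0 := by
  have h1 : (0:ℝ) < 1 + a ^ 2 := by positivity
  have h2 : (0:ℝ) < 1 + b ^ 2 := by positivity
  have h3 : (0:ℝ) < 1 + a * b := by positivity
  have h4 : (0:ℝ) < 1 - a * b := by linarith
  have h5 : (0:ℝ) < a + b := by linarith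
  have e1 : b ^ 2 / (1 + b ^ 2) + (1 - a ^ 2 / (1 + a ^ 2)) * (a * b)
      = b * (a + b) * (1 + a * b) / ((1 + a ^ 2) * (1 + b ^ 2)) := by
    field_simp; ring
  have e2 : a ^ 2 / (1 + a ^ 2) + (1 - b ^ 2 / (1 + b ^ 2)) * (a * b)
      = a * (a + b) * (1 + a * b) / ((1 + a ^ 2) * (1 + b ^ 2)) := by
    field_simp; ring
  have e3 : a ^ 2 / (1 + a ^ 2) + (1 - a ^ 2 / (1 + a ^ 2)) * (a * b)
      = a * (a + b) / (1 + a ^ 2) := by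
    field_simp; ring
  have e4 : b ^ 2 / (1 + b ^ 2) + (1 - b ^ 2 / (1 + b ^ 2)) * (a * b)
      = b * (a + b) / (1 + b ^ 2) := by
    field_simp; ring
  have e5 : a ^ 2 / (1 + a ^ 2) + b ^ 2 / (1 + b ^ 2)
      + (2 - a ^ 2 / (1 + a ^ 2) - b ^ 2 / (1 + b ^ 2)) * (a * b)
      = (a + b) ^ 2 * (1 + a * b) / ((1 + a ^ 2) * (1 + b ^ 2)) := by
    field_simp; ring
  unfold gfun
  rw [e1, e2, e3, e4, e5]
  field_simp
  ring

lemma alg2 (a b : ℝ) (ha : 0 < a) (hb : 0 < b) (hab : a * b < 1) :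
    gfun2 (a ^ 2 / (1 + a ^ 2)) (b ^ 2 / (1 + b ^ 2)) (a * b) = 0 := by
  have h1 : (0:ℝ) < 1 + a ^ 2 := by positivity
  have h2 : (0:ℝ) < 1 + b ^ 2 := by positivity
  have h3 : (0:ℝ) < 1 + a * b := by positivity
  have h4 : (0:ℝ) < 1 - a * b := by linarith
  have h5 : (0:ℝ) < a + b := by linarith
  have e1 : b ^ 2 / (1 + b ^ 2) + (1 - a ^ 2 / (1 + a ^ 2)) * (a * b)
      = b * (a + b) * (1 + a * b) / ((1 + a ^ 2) * (1 + b ^ 2)) := by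
    field_simp; ring
  have e2 : a ^ 2 / (1 + a ^ 2) + (1 - b ^ 2 / (1 + b ^ 2)) * (a * b)
      = a * (a + b) * (1 + a * b) / ((1 + a ^ 2) * (1 + b ^ 2)) := by
    field_simp; ring
  have e3 : a ^ 2 / (1 + a ^ 2) + (1 - a ^ 2 / (1 + a ^ 2)) * (a * b)
      = a * (a + b) / (1 + a ^ 2) := by
    field_simp; ring
  have e4 : b ^ 2 / (1 + b ^ 2) + (1 - b ^ 2 / (1 + b ^ 2)) * (a * b)
      = b * (a + b) / (1 + b ^ 2) := by
    field_simp; ring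
  have e5 : a ^ 2 / (1 + a ^ 2) + b ^ 2 / (1 + b ^ 2)
      + (2 - a ^ 2 / (1 + a ^ 2) - b ^ 2 / (1 + b ^ 2)) * (a * b)
      = (a + b) ^ 2 * (1 + a * b) / ((1 + a ^ 2) * (1 + b ^ 2)) := by
    field_simp; ring
  have t1 : a ^ 2 / (1 + a ^ 2) * (b ^ 2 / (1 + b ^ 2)) / (a * b) ^ 2
      = 2 * (1 + a ^ 2) * (1 + b ^ 2) * (a + b) ^ 2 * (1 + a * b) ^ 2
        / (2 * (1 + a ^ 2) ^ 2 * (1 + b ^ 2) ^ 2 * (a + b) ^ 2 * (1 + a * b) ^ 2) := by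
    field_simp
  have t2 : (1 - a ^ 2 / (1 + a ^ 2) - b ^ 2 / (1 + b ^ 2)) ^ 2 / 2 / (1 - a * b) ^ 2
      = (a + b) ^ 2 * (1 + a * b) ^ 4
        / (2 * (1 + a ^ 2) ^ 2 * (1 + b ^ 2) ^ 2 * (a + b) ^ 2 * (1 + a * b) ^ 2) := by
    field_simp; ring
  have t3 : (1:ℝ) / 2 / (1 + a * b) ^ 2
      = (1 + a ^ 2) ^ 2 * (1 + b ^ 2) ^ 2 * (a + b) ^ 2
        / (2 * (1 + a ^ 2) ^ 2 * (1 + b ^ 2) ^ 2 * (a + b) ^ 2 * (1 + a * b) ^ 2) := by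
    field_simp
  have t4 : (1 - a ^ 2 / (1 + a ^ 2)) * (b ^ 2 / (1 + b ^ 2)) * (1 - a ^ 2 / (1 + a ^ 2)) ^ 2
        / (b ^ 2 / (1 + b ^ 2) + (1 - a ^ 2 / (1 + a ^ 2)) * (a * b)) ^ 2
      = 2 * (1 + a ^ 2) * (1 + b ^ 2) ^ 3
        / (2 * (1 + a ^ 2) ^ 2 * (1 + b ^ 2) ^ 2 * (a + b) ^ 2 * (1 + a * b) ^ 2) := by
    rw [e1]; field_simp; ring
  have t5 : a ^ 2 / (1 + a ^ 2) * (1 - b ^ 2 / (1 + b ^ 2)) * (1 - b ^ 2 / (1 + b ^ 2)) ^ 2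
        / (a ^ 2 / (1 + a ^ 2) + (1 - b ^ 2 / (1 + b ^ 2)) * (a * b)) ^ 2
      = 2 * (1 + a ^ 2) ^ 3 * (1 + b ^ 2)
        / (2 * (1 + a ^ 2) ^ 2 * (1 + b ^ 2) ^ 2 * (a + b) ^ 2 * (1 + a * b) ^ 2) := by
    rw [e2]; field_simp; ring
  have t6 : a ^ 2 / (1 + a ^ 2) * (1 - a ^ 2 / (1 + a ^ 2)) * (1 - a ^ 2 / (1 + a ^ 2)) ^ 2
        / (a ^ 2 / (1 + a ^ 2) + (1 - a ^ 2 / (1 + a ^ 2)) * (a * b)) ^ 2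
      = 2 * (1 + b ^ 2) ^ 2 * (1 + a * b) ^ 2
        / (2 * (1 + a ^ 2) ^ 2 * (1 + b ^ 2) ^ 2 * (a + b) ^ 2 * (1 + a * b) ^ 2) := by
    rw [e3]; field_simp; ring
  have t7 : b ^ 2 / (1 + b ^ 2) * (1 - b ^ 2 / (1 + b ^ 2)) * (1 - b ^ 2 / (1 + b ^ 2)) ^ 2
        / (b ^ 2 / (1 + b ^ 2) + (1 - b ^ 2 / (1 + b ^ 2)) * (a * b)) ^ 2
      = 2 * (1 + a ^ 2) ^ 2 * (1 + a * b) ^ 2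
        / (2 * (1 + a ^ 2) ^ 2 * (1 + b ^ 2) ^ 2 * (a + b) ^ 2 * (1 + a * b) ^ 2) := by
    rw [e4]; field_simp; ring
  have t8 : (a ^ 2 / (1 + a ^ 2) - b ^ 2 / (1 + b ^ 2)) ^ 2 / 2
        * (2 - a ^ 2 / (1 + a ^ 2) - b ^ 2 / (1 + b ^ 2)) ^ 2
        / (a ^ 2 / (1 + a ^ 2) + b ^ 2 / (1 + b ^ 2)
            + (2 - a ^ 2 / (1 + a ^ 2) - b ^ 2 / (1 + b ^ 2)) * (a * b)) ^ 2
      = (a - b) ^ 2 * ((1 + a ^ 2) + (1 + b ^ 2)) ^ 2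
        / (2 * (1 + a ^ 2) ^ 2 * (1 + b ^ 2) ^ 2 * (a + b) ^ 2 * (1 + a * b) ^ 2) := by
    rw [e5]; field_simp; ring
  unfold gfun2
  rw [t1, t2, t3, t4, t5, t6, t7, t8]
  ring

/-- the first and second derivatives of `η ↦ χ(x,y;η)` vanish at
`η = h = √(xy/((1−x)(1−y)))`. -/
theorem chi_first_two_derivs_vanish (x y : ℝ)
    (hy : 0 < y) (hyx : y ≤ x) (hxy : x + y < 1) :
    deriv (fun η => chi x y η) (Real.sqrt (x * y / ((1 - x) * (1 - y)))) = 0 ∧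
    deriv (deriv (fun η => chi x y η)) (Real.sqrt (x * y / ((1 - x) * (1 - y)))) = 0 := by
  have hx : 0 < x := lt_of_lt_of_le hy hyx
  have hx1 : x < 1 := by linarith
  have hy1 : y < 1 := by linarith
  have h1x : (0:ℝ) < 1 - x := by linarith
  have h1y : (0:ℝ) < 1 - y := by linarith
  obtain ⟨a, ha, hxa⟩ : ∃ a : ℝ, 0 < a ∧ x = a ^ 2 / (1 + a ^ 2) := by
    refine ⟨Real.sqrt (x / (1 - x)), Real.sqrt_pos.2 (div_pos hx h1x), ?_⟩
    rw [Real.sq_sqrt (le_of_lt (div_pos hx h1x))]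
    field_simp
    ring
  obtain ⟨b, hb, hyb⟩ : ∃ b : ℝ, 0 < b ∧ y = b ^ 2 / (1 + b ^ 2) := by
    refine ⟨Real.sqrt (y / (1 - y)), Real.sqrt_pos.2 (div_pos hy h1y), ?_⟩
    rw [Real.sq_sqrt (le_of_lt (div_pos hy h1y))]
    field_simp
    ring
  have hsq : x * y / ((1 - x) * (1 - y)) = (a * b) ^ 2 := by
    rw [hxa, hyb]; field_simp; ring
  have hh : Real.sqrt (x * y / ((1 - x) * (1 - y))) = a * b := by
    rw [hsq]
    exact Real.sqrt_sq (by positivity)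
  have hab0 : 0 < a * b := by positivity
  have hlt : (a * b) ^ 2 < 1 := by
    rw [← hsq]
    exact (div_lt_one (mul_pos h1x h1y)).2 (by nlinarith)
  have hab1 : a * b < 1 := by nlinarith
  rw [hh]
  constructor
  · rw [(chi_hasDeriv x y hy hx hx1 hy1 hab0 hab1).deriv, hxa, hyb]
    exact alg1 a b ha hb hab1
  · have hev : deriv (fun η => chi x y η) =ᶠ[nhds (a * b)] fun t => gfun x y t := by
      filter_upwards [Ioo_mem_nhds hab0 hab1] with t ht
      exact (chi_hasDeriv x y hy hx hx1 hy1 ht.1 ht.2).deriv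
    rw [hev.deriv_eq, (gfun_hasDeriv x y hy hx hx1 hy1 hab0 hab1).deriv, hxa, hyb]
    exact alg2 a b ha hb hab1
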